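/- Let Π be a uniformly ergodic Markov kernel on X, i.e., Π^m(x,A) ≥ ε ν(A) for all x ∈ X, A ∈ B(X), for some m ∈ ℕ, ε > 0 and probability measure ν. Let X̌ = X ∪ {a} and let Π̌ be a Markov kernel on X̌ with Π̌(a, X) > 0 and Π̌(x,A) ≥ w Π(x,A) for all x ∈ X, A ∈ B(X), for some w > 0. Then Π̌^{m+1}(x,A) ≥ min{w, Π̌(a,X)} w^m ε ν(A) for all x ∈ X̌ and A ∈ B(X); in particular Π̌ is uniformly ergodic. -/

import Mathlib

open MeasureTheory ProbabilityTheory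
open scoped ENNReal

/-- n-step iterate of a Markov kernel. -/
noncomputable def kpow {X : Type*} [MeasurableSpace X] (κ : Kernel X X) : ℕ → Kernel X X
  | 0 => Kernel.id
  | n + 1 => (kpow κ n).comp κ

/-- Lift of a function on `X` to `Option X` by `0` at `none`. -/
noncomputable def olift {X : Type*} (f : X → ℝ≥0∞) : Option X → ℝ≥0∞ :=
  fun y => y.elim 0 f

lemma simple_lift_le {X : Type*} [MeasurableSpace X] [MeasurableSpace (Option X)]
    (hsome : ∀ A : Set X, MeasurableSet A → MeasurableSet (Option.some '' A))
    (μ : Measure X) (ρ : Measure (Option X))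
    (hdom : ∀ A : Set X, MeasurableSet A → μ A ≤ ρ (Option.some '' A))
    (φ : SimpleFunc X ℝ≥0∞) :
    φ.lintegral μ ≤ ∫⁻ y, olift φ y ∂ρ := by
  induction φ using MeasureTheory.SimpleFunc.induction with
  | @const c s hs =>
    have h1 : (SimpleFunc.piecewise s hs (SimpleFunc.const _ c)
        (SimpleFunc.const _ (0 : ℝ≥0∞))).lintegral μ = c * μ s := by
      rw [← SimpleFunc.lintegral_eq_lintegral]
      have : ⇑(SimpleFunc.piecewise s hs (SimpleFunc.const _ c)
          (SimpleFunc.const _ (0 : ℝ≥0∞))) = s.indicator (fun _ => c) := by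
        ext z
        by_cases hz : z ∈ s <;>
          simp [SimpleFunc.coe_piecewise, Set.piecewise, Set.indicator, hz]
      rw [this, lintegral_indicator hs, lintegral_const, Measure.restrict_apply_univ]
    have h2 : olift ⇑(SimpleFunc.piecewise s hs (SimpleFunc.const _ c)
        (SimpleFunc.const _ (0 : ℝ≥0∞))) = (Option.some '' s).indicator (fun _ => c) := by
      ext y
      cases y with
      | none => simp [olift, Set.indicator]
      | some z =>
        by_cases hz : z ∈ s <;>
          simp [olift, SimpleFunc.coe_piecewise, Set.piecewise, Set.indicator, hz,
            Option.some_injective X |>.mem_set_image]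
    rw [h1, h2, lintegral_indicator (hsome s hs), lintegral_const,
      Measure.restrict_apply_univ]
    exact mul_le_mul_right (hdom s hs) c
  | @add f g _ hf hg =>
    have h3 : olift ⇑(f + g) = olift ⇑f + olift ⇑g := by
      ext y; cases y <;> simp [olift]
    rw [SimpleFunc.add_lintegral, h3]
    exact (add_le_add hf hg).trans (le_lintegral_add _ _)

lemma lintegral_lift_le {X : Type*} [MeasurableSpace X] [MeasurableSpace (Option X)]
    (hsome : ∀ A : Set X, MeasurableSet A → MeasurableSet (Option.some '' A))
    (μ : Measure X) (ρ : Measure (Option X))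
    (hdom : ∀ A : Set X, MeasurableSet A → μ A ≤ ρ (Option.some '' A))
    (f : X → ℝ≥0∞) (g : Option X → ℝ≥0∞) (hfg : ∀ z, f z ≤ g (some z)) :
    ∫⁻ z, f z ∂μ ≤ ∫⁻ y, g y ∂ρ := by
  rw [MeasureTheory.lintegral_def]
  refine iSup₂_le fun φ hφ => ?_
  refine (simple_lift_le hsome μ ρ hdom φ).trans (lintegral_mono fun y => ?_)
  cases y with
  | none => simp [olift]
  | some z => exact le_trans (hφ z) (hfg z)

/-- if Π is uniformly ergodic (Π^m ≥ εν) and Π̌ on X̌ = X ∪ {a}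
(modelled as `Option X` with `none` the atom a) satisfies Π̌(a,X) > 0 and
Π̌(x,·) ≥ wΠ(x,·) on X, then Π̌^{m+1}(x,A) ≥ min{w, Π̌(a,X)} w^m ε ν(A) for all
x ∈ X̌ and measurable A ⊆ X; in particular Π̌ is uniformly ergodic. -/
theorem stmt_12 {X : Type*} [MeasurableSpace X] [MeasurableSpace (Option X)]
    (K : Kernel X X) [IsMarkovKernel K]
    (Kc : Kernel (Option X) (Option X)) [IsMarkovKernel Kc]
    (ν : Measure X) [IsProbabilityMeasure ν] (ε w : ℝ) (hε : 0 < ε) (hw : 0 < w)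
    (m : ℕ)
    (hsome : ∀ A : Set X, MeasurableSet A → MeasurableSet (Option.some '' A))
    (hmin : ∀ x A, MeasurableSet A → ENNReal.ofReal ε * ν A ≤ kpow K m x A)
    (ha : 0 < Kc none (Set.range Option.some))
    (hmod : ∀ x A, MeasurableSet A →
      ENNReal.ofReal w * K x A ≤ Kc (some x) (Option.some '' A)) :
    ∀ (x : Option X) (A : Set X), MeasurableSet A →
      min (ENNReal.ofReal w) (Kc none (Set.range Option.some)) * (ENNReal.ofReal w) ^ m *
          ENNReal.ofReal ε * ν A
        ≤ kpow Kc (m + 1) x (Option.some '' A) := by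
  -- Step 1: the iterates of `Kc` dominate `w^n` times the iterates of `K` on `X`.
  have hdom : ∀ n : ℕ, ∀ (x : X) (A : Set X), MeasurableSet A →
      (ENNReal.ofReal w) ^ n * kpow K n x A ≤ kpow Kc n (some x) (Option.some '' A) := by
    intro n
    induction n with
    | zero =>
      intro x A hA
      simp only [kpow, pow_zero, one_mul, Kernel.id_apply]
      rw [Measure.dirac_apply' x hA, Measure.dirac_apply' (some x) (hsome A hA)]
      by_cases hx : x ∈ A
      · simp [Set.indicator, hx, Set.mem_image_of_mem _ hx]
      · simp [Set.indicator, hx]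
    | succ n ih =>
      intro x A hA
      have hS := hsome A hA
      rw [show kpow Kc (n + 1) = (kpow Kc n).comp Kc from rfl,
        Kernel.comp_apply' _ _ _ hS,
        show kpow K (n + 1) = (kpow K n).comp K from rfl,
        Kernel.comp_apply' _ _ _ hA]
      have hmeas : Measurable fun z => kpow K n z A := Kernel.measurable_coe _ hA
      have heq : (ENNReal.ofReal w) ^ (n + 1) * ∫⁻ z, kpow K n z A ∂(K x)
          = ∫⁻ z, (ENNReal.ofReal w) ^ n * kpow K n z A
              ∂((ENNReal.ofReal w) • K x) := by
        rw [lintegral_smul_measure, lintegral_const_mul _ hmeas, pow_succ]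
        ring
      rw [heq]
      refine lintegral_lift_le hsome ((ENNReal.ofReal w) • K x) (Kc (some x))
        (fun B hB => ?_) _ _ (fun z => ih z A hA)
      rw [Measure.smul_apply, smul_eq_mul]
      exact hmod x B hB
  -- Step 2: conclude.
  intro x A hA
  have hS := hsome A hA
  have hru : Set.range (Option.some : X → Option X) = Option.some '' Set.univ :=
    Set.image_univ.symm
  have hrm : MeasurableSet (Set.range (Option.some : X → Option X)) := by
    rw [hru]; exact hsome _ MeasurableSet.univ
  set c : ℝ≥0∞ := (ENNReal.ofReal w) ^ m * ENNReal.ofReal ε * ν A with hc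
  rw [show kpow Kc (m + 1) = (kpow Kc m).comp Kc from rfl, Kernel.comp_apply' _ _ _ hS]
  have hpt : ∀ y, (Set.range (Option.some : X → Option X)).indicator (fun _ => c) y
      ≤ kpow Kc m y (Option.some '' A) := by
    intro y
    cases y with
    | none =>
      have : (none : Option X) ∉ Set.range (Option.some : X → Option X) := by simp
      simp [Set.indicator_of_notMem this]
    | some z =>
      rw [Set.indicator_of_mem (Set.mem_range_self z) _]
      calc c = (ENNReal.ofReal w) ^ m * (ENNReal.ofReal ε * ν A) := by
              rw [hc, mul_assoc]
        _ ≤ (ENNReal.ofReal w) ^ m * kpow K m z A :=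
              mul_le_mul_right (hmin z A hA) _
        _ ≤ kpow Kc m (some z) (Option.some '' A) := hdom m z A hA
  have h1 : c * Kc x (Set.range Option.some)
      ≤ ∫⁻ y, kpow Kc m y (Option.some '' A) ∂(Kc x) := by
    calc c * Kc x (Set.range Option.some)
        = ∫⁻ y, (Set.range (Option.some : X → Option X)).indicator (fun _ => c) y
            ∂(Kc x) := by
          rw [lintegral_indicator hrm, lintegral_const, Measure.restrict_apply_univ]
      _ ≤ _ := lintegral_mono hpt
  have h2 : min (ENNReal.ofReal w) (Kc none (Set.range Option.some))
      ≤ Kc x (Set.range Option.some) := by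
    cases x with
    | none => exact min_le_right _ _
    | some z =>
      refine le_trans (min_le_left _ _) ?_
      have := hmod z Set.univ MeasurableSet.univ
      rw [measure_univ, mul_one] at this
      rwa [hru]
  refine le_trans ?_ h1
  calc min (ENNReal.ofReal w) (Kc none (Set.range Option.some)) * (ENNReal.ofReal w) ^ m *
        ENNReal.ofReal ε * ν A
      = min (ENNReal.ofReal w) (Kc none (Set.range Option.some)) * c := by
        rw [hc]; ring
    _ ≤ Kc x (Set.range Option.some) * c := mul_le_mul_left h2 c
    _ = c * Kc x (Set.range Option.some) := mul_comm _ _
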